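/- Assume X_1,…,X_n are i.i.d. Bernoulli(p) and Y_k = X_k ⊕ V_k, with V_1,…,V_n i.i.d. Bernoulli(α) independent of X^n, where p ∈ (1/2, 1), α ∈ (0, 1/2), and 1−α > p. Let ε_L < 1−α be such that h̲_n(ε)^n = 1 − ζ_n(ε)q^n for all ε ∈ [ε_L, 1−α], where q := α(1−p) + (1−α)p and ζ_n(ε) := ((1−α)^n − ε^n)/(((1−α)p)^n − (α(1−p))^n) (such ε_L exists). Then for all sufficiently large n and every ε ∈ [ε_L, 1−α]: h̲_n(ε) − h_n^i(ε) ≥ ((1−α) − ε)·(Φ(1) − Φ(n)), where Φ(m) := q^m (1−α)^{m−1} / (((1−α)p)^m − (α(1−p))^m). -/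

import Mathlib

open Finset

/-- `bern p b = p` if `b = true`, and `1 - p` otherwise. -/
noncomputable def bern (p : ℝ) (b : Bool) : ℝ := if b then p else 1 - p

/-- Joint pmf of `(X^n, Y^n)` where `X_1,…,X_n` are i.i.d. `Bernoulli(p)` and
`Y_k = X_k ⊕ V_k` with `V_1,…,V_n` i.i.d. `Bernoulli(α)` independent of `X^n`. -/
noncomputable def jointIID (n : ℕ) (p α : ℝ) :
    (Fin n → Bool) → (Fin n → Bool) → ℝ :=
  fun x y => ∏ k, bern p (x k) * bern α (xor (x k) (y k))

/-- `F` is a channel (row-stochastic matrix) on a finite alphabet. -/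
def IsChannel {V : Type*} [Fintype V] (F : V → V → ℝ) : Prop :=
  (∀ y z, 0 ≤ F y z) ∧ ∀ y, ∑ z, F y z = 1

/-- `P_c(X|Z)` where `Z` is the output of the channel `F` applied to `Y` and
`X – Y – Z` is a Markov chain, for joint pmf `P` of `(X,Y)`. -/
noncomputable def pcXZ {X V : Type*} [Fintype X] [Fintype V] [Nonempty X]
    (P : X → V → ℝ) (F : V → V → ℝ) : ℝ :=
  ∑ z, ⨆ x, ∑ y, P x y * F y z

/-- `P_c(Y|Z)` where `Z` is the output of the channel `F` applied to `Y`. -/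
noncomputable def pcYZ {X V : Type*} [Fintype X] [Fintype V] [Nonempty V]
    (P : X → V → ℝ) (F : V → V → ℝ) : ℝ :=
  ∑ z, ⨆ y, (∑ x, P x y) * F y z

/-- The Z-channel from `y0` to `z0` with crossover probability `ζ`: every `y ≠ y0` is
mapped to itself with probability `1`, while `y0` is mapped to `z0` with probability
`ζ` and to itself with probability `1 − ζ`. -/
noncomputable def Zch {V : Type*} [DecidableEq V] (y0 z0 : V) (ζ : ℝ) : V → V → ℝ :=
  fun y z =>
    if y = y0 then (if z = z0 then ζ else if z = y0 then 1 - ζ else 0)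
    else (if z = y then 1 else 0)

/-- The memoryless privacy filter built from a single binary-input binary-output
channel `W`. -/
noncomputable def memless (n : ℕ) (W : Bool → Bool → ℝ) :
    (Fin n → Bool) → (Fin n → Bool) → ℝ :=
  fun y z => ∏ k, W (y k) (z k)

/-- `h_n^i(ε)`: the best normalized guessing probability `P_c(Y^n|Z^n)^{1/n}` over
memoryless privacy filters satisfying `P_c(X^n|Z^n)^{1/n} ≤ ε`. -/
noncomputable def hMemless (n : ℕ) (p α : ℝ) (ε : ℝ) : ℝ :=
  sSup {u | ∃ W : Bool → Bool → ℝ, (∀ y z, 0 ≤ W y z) ∧ (∀ y, ∑ z, W y z = 1) ∧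
    pcXZ (jointIID n p α) (memless n W) ^ ((n : ℝ)⁻¹) ≤ ε ∧
    u = pcYZ (jointIID n p α) (memless n W) ^ ((n : ℝ)⁻¹)}

/-- `h̲_n(ε)`: the best normalized guessing probability `P_c(Y^n|Z^n)^{1/n}` over all
channels with output alphabet `{0,1}^n` satisfying `P_c(X^n|Z^n)^{1/n} ≤ ε`. -/
noncomputable def hUnderN (n : ℕ) (p α : ℝ) (ε : ℝ) : ℝ :=
  sSup {u | ∃ F : (Fin n → Bool) → (Fin n → Bool) → ℝ, IsChannel F ∧
    pcXZ (jointIID n p α) F ^ ((n : ℝ)⁻¹) ≤ ε ∧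
    u = pcYZ (jointIID n p α) F ^ ((n : ℝ)⁻¹)}

/-- `Φ(m) = q^m (1−α)^{m−1} / (((1−α)p)^m − (α(1−p))^m)`. -/
noncomputable def Phi (p α : ℝ) (m : ℕ) : ℝ :=
  (α * (1 - p) + (1 - α) * p) ^ m * (1 - α) ^ (m - 1) /
    (((1 - α) * p) ^ m - (α * (1 - p)) ^ m)

/-! helpers -/

noncomputable def P1 (p α : ℝ) : Bool → Bool → ℝ := fun x y => bern p x * bern α (xor x y)

lemma bern_nonneg {p : ℝ} (h0 : 0 ≤ p) (h1 : p ≤ 1) (b : Bool) : 0 ≤ bern p b := by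
  cases b <;> simp [bern] <;> linarith

lemma P1_nonneg {p α : ℝ} (hp0 : 0 ≤ p) (hp1 : p ≤ 1) (ha0 : 0 ≤ α) (ha1 : α ≤ 1)
    (x y : Bool) : 0 ≤ P1 p α x y :=
  mul_nonneg (bern_nonneg hp0 hp1 x) (bern_nonneg ha0 ha1 _)

lemma sup_bool (f : Bool → ℝ) : (⨆ b, f b) = max (f false) (f true) := by
  apply le_antisymm
  · refine ciSup_le fun b => ?_
    cases b
    · exact le_max_left _ _
    · exact le_max_right _ _
  · exact max_le (le_ciSup (Set.finite_range f).bddAbove false)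
      (le_ciSup (Set.finite_range f).bddAbove true)

lemma sum_pi_prod {n : ℕ} (g : Fin n → Bool → ℝ) :
    (∑ y : Fin n → Bool, ∏ k, g k (y k)) = ∏ k, ∑ b, g k b := by
  rw [Finset.prod_univ_sum, Fintype.piFinset_univ]

lemma jointIID_eq {n : ℕ} {p α : ℝ} (x y : Fin n → Bool) :
    jointIID n p α x y = ∏ k, P1 p α (x k) (y k) := rfl

lemma pcXZ_nonneg {X V : Type*} [Fintype X] [Fintype V] [Nonempty X]
    (P : X → V → ℝ) (F : V → V → ℝ) (hP : ∀ x y, 0 ≤ P x y) (hF : ∀ y z, 0 ≤ F y z) :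
    0 ≤ pcXZ P F := by
  refine Finset.sum_nonneg fun z _ => ?_
  obtain ⟨x0⟩ := (inferInstance : Nonempty X)
  refine le_trans (Finset.sum_nonneg fun y _ => mul_nonneg (hP x0 y) (hF y z))
    (le_ciSup (f := fun x => ∑ y, P x y * F y z) (Set.finite_range _).bddAbove x0)

lemma pcYZ_nonneg {X V : Type*} [Fintype X] [Fintype V] [Nonempty V]
    (P : X → V → ℝ) (F : V → V → ℝ) (hP : ∀ x y, 0 ≤ P x y) (hF : ∀ y z, 0 ≤ F y z) :
    0 ≤ pcYZ P F := by
  refine Finset.sum_nonneg fun z _ => ?_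
  obtain ⟨y0⟩ := (inferInstance : Nonempty V)
  refine le_trans (mul_nonneg (Finset.sum_nonneg fun x _ => hP x y0) (hF y0 z))
    (le_ciSup (f := fun y => (∑ x, P x y) * F y z) (Set.finite_range _).bddAbove y0)

/-- inner sum factorization -/
lemma inner_sum_eq {n : ℕ} {p α : ℝ} (W : Bool → Bool → ℝ) (x z : Fin n → Bool) :
    (∑ y : Fin n → Bool, jointIID n p α x y * memless n W y z)
      = ∏ k, ∑ b, P1 p α (x k) b * W b (z k) := by
  rw [← sum_pi_prod (g := fun k b => P1 p α (x k) b * W b (z k))]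
  refine Finset.sum_congr rfl fun y _ => ?_
  rw [jointIID_eq, memless, ← Finset.prod_mul_distrib]

lemma marg_sum_eq {n : ℕ} {p α : ℝ} (y : Fin n → Bool) :
    (∑ x : Fin n → Bool, jointIID n p α x y) = ∏ k, ∑ b, P1 p α b (y k) := by
  rw [← sum_pi_prod (g := fun k b => P1 p α b (y k))]
  exact Finset.sum_congr rfl fun x _ => jointIID_eq x y

/-- pcXZ of memoryless filter dominates n-th power of single-letter pcXZ -/
lemma pcXZ_factor_ge {n : ℕ} {p α : ℝ} (hp0 : 0 ≤ p) (hp1 : p ≤ 1) (ha0 : 0 ≤ α)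
    (ha1 : α ≤ 1) (W : Bool → Bool → ℝ) (hW : ∀ y z, 0 ≤ W y z) :
    pcXZ (P1 p α) W ^ n ≤ pcXZ (jointIID n p α) (memless n W) := by
  classical
  set A : Bool → Bool → ℝ := fun u v => ∑ b, P1 p α u b * W b v with hA
  set M : Bool → ℝ := fun v => max (A false v) (A true v) with hM
  have h1 : pcXZ (P1 p α) W = ∑ v, M v := by
    refine Finset.sum_congr rfl fun v _ => ?_
    exact sup_bool (fun u => ∑ b, P1 p α u b * W b v)
  have h2 : (∑ z : Fin n → Bool, ∏ k, M (z k)) = (∑ v, M v) ^ n := by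
    rw [sum_pi_prod (g := fun _ b => M b), Finset.prod_const, Finset.card_univ,
      Fintype.card_fin]
  have h3 : ∀ z : Fin n → Bool,
      (∏ k, M (z k)) ≤ ⨆ x, ∑ y, jointIID n p α x y * memless n W y z := by
    intro z
    set x0 : Fin n → Bool := fun k => if A false (z k) ≤ A true (z k) then true else false
      with hx0
    have he : (∏ k, M (z k)) = ∑ y, jointIID n p α x0 y * memless n W y z := by
      rw [inner_sum_eq]
      refine Finset.prod_congr rfl fun k _ => ?_
      by_cases h : A false (z k) ≤ A true (z k)
      · simp only [hM, hx0, if_pos h]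
        exact max_eq_right h
      · simp only [hM, hx0, if_neg h]
        exact max_eq_left (le_of_not_ge h)
    rw [he]
    exact le_ciSup (f := fun x => ∑ y, jointIID n p α x y * memless n W y z)
      (Set.finite_range _).bddAbove x0
  calc pcXZ (P1 p α) W ^ n = ∑ z : Fin n → Bool, ∏ k, M (z k) := by rw [h1, h2]
    _ ≤ pcXZ (jointIID n p α) (memless n W) := Finset.sum_le_sum fun z _ => h3 z

/-- pcYZ of memoryless filter is at most n-th power of single-letter pcYZ -/
lemma pcYZ_factor_le {n : ℕ} {p α : ℝ} (hp0 : 0 ≤ p) (hp1 : p ≤ 1) (ha0 : 0 ≤ α)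
    (ha1 : α ≤ 1) (W : Bool → Bool → ℝ) (hW : ∀ y z, 0 ≤ W y z) :
    pcYZ (jointIID n p α) (memless n W) ≤ pcYZ (P1 p α) W ^ n := by
  classical
  set g : Bool → Bool → ℝ := fun u v => (∑ b, P1 p α b u) * W u v with hg
  set M : Bool → ℝ := fun v => max (g false v) (g true v) with hM
  have hpY : ∀ u, 0 ≤ ∑ b, P1 p α b u := fun u =>
    Finset.sum_nonneg fun b _ => P1_nonneg hp0 hp1 ha0 ha1 b u
  have h1 : pcYZ (P1 p α) W = ∑ v, M v := by
    refine Finset.sum_congr rfl fun v _ => ?_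
    exact sup_bool (fun u => (∑ b, P1 p α b u) * W u v)
  have h2 : (∑ z : Fin n → Bool, ∏ k, M (z k)) = (∑ v, M v) ^ n := by
    rw [sum_pi_prod (g := fun _ b => M b), Finset.prod_const, Finset.card_univ,
      Fintype.card_fin]
  have h3 : ∀ z : Fin n → Bool,
      (⨆ y, (∑ x, jointIID n p α x y) * memless n W y z) ≤ ∏ k, M (z k) := by
    intro z
    refine ciSup_le fun y => ?_
    have he : (∑ x, jointIID n p α x y) * memless n W y z = ∏ k, g (y k) (z k) := by
      rw [marg_sum_eq, memless, ← Finset.prod_mul_distrib]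
    rw [he]
    refine Finset.prod_le_prod (fun k _ => mul_nonneg (hpY _) (hW _ _)) fun k _ => ?_
    cases hyk : y k
    · exact le_max_left _ _
    · exact le_max_right _ _
  calc pcYZ (jointIID n p α) (memless n W) ≤ ∑ z : Fin n → Bool, ∏ k, M (z k) :=
        Finset.sum_le_sum fun z _ => h3 z
    _ = pcYZ (P1 p α) W ^ n := by rw [h2, h1]

/-- any channel has pcXZ at least p^n -/
lemma pcXZ_ge_pow {n : ℕ} {p α : ℝ}
    (F : (Fin n → Bool) → (Fin n → Bool) → ℝ) (hF : IsChannel F) :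
    p ^ n ≤ pcXZ (jointIID n p α) F := by
  classical
  set x0 : Fin n → Bool := fun _ => true with hx0
  have h1 : (∑ z, ∑ y, jointIID n p α x0 y * F y z) ≤ pcXZ (jointIID n p α) F :=
    Finset.sum_le_sum fun z _ => le_ciSup (f := fun x => ∑ y, jointIID n p α x y * F y z)
      (Set.finite_range _).bddAbove x0
  have h2 : (∑ z, ∑ y, jointIID n p α x0 y * F y z) = ∑ y, jointIID n p α x0 y := by
    rw [Finset.sum_comm]
    refine Finset.sum_congr rfl fun y _ => ?_
    rw [← Finset.mul_sum, hF.2 y, mul_one]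
  have h3 : (∑ y, jointIID n p α x0 y) = p ^ n := by
    have := sum_pi_prod (n := n) (g := fun _ b => P1 p α true b)
    rw [show (∑ y : Fin n → Bool, jointIID n p α x0 y)
        = ∑ y : Fin n → Bool, ∏ k, P1 p α true (y k) from rfl, this]
    have hc : ∀ v : Bool, (∑ b, P1 p α v b) = bern p v := by
      intro v
      rw [Fintype.sum_bool]
      cases v <;> simp [P1, bern] <;> ring
    rw [Finset.prod_congr rfl fun k _ => hc true, Finset.prod_const, Finset.card_univ,
      Fintype.card_fin]
    rfl
  rw [← h3, ← h2]
  exact h1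

set_option maxHeartbeats 2000000 in
/-- The key single-letter inequality. -/
lemma key_single {p α : ℝ} (hp : 1/2 < p) (hp1 : p < 1) (ha0 : 0 < α) (ha1 : α < 1/2)
    (W : Bool → Bool → ℝ) (hW0 : ∀ y z, 0 ≤ W y z) (hW1 : ∀ y, ∑ z, W y z = 1) :
    (α*(1-p)+(1-α)*p) * (1-α) ≤
      (p - α) * (1 - pcYZ (P1 p α) W) + (α*(1-p)+(1-α)*p) * pcXZ (P1 p α) W := by
  have hwa : W false false = 1 - W false true := by
    have := hW1 false; rw [Fintype.sum_bool] at this; linarith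
  have hwb : W true true = 1 - W true false := by
    have := hW1 true; rw [Fintype.sum_bool] at this; linarith
  have ha' : 0 ≤ W false true := hW0 false true
  have ha'' : W false true ≤ 1 := by have := hW0 false false; rw [hwa] at this; linarith
  have hb' : 0 ≤ W true false := hW0 true false
  have hb'' : W true false ≤ 1 := by have := hW0 true true; rw [hwb] at this; linarith
  have hX : pcXZ (P1 p α) W =
      max ((1-p)*α*(1-W true false) + (1-p)*(1-α)*(W false true))
          (p*(1-α)*(1-W true false) + p*α*(W false true))
      + max ((1-p)*α*(W true false) + (1-p)*(1-α)*(1-W false true))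
          (p*(1-α)*(W true false) + p*α*(1-W false true)) := by
    rw [pcXZ, Fintype.sum_bool, sup_bool (fun u => ∑ c, P1 p α u c * W c true),
      sup_bool (fun u => ∑ c, P1 p α u c * W c false)]
    simp only [Fintype.sum_bool, P1, bern, hwa, hwb]
    norm_num
  have hY : pcYZ (P1 p α) W =
      max ((p*α + (1-p)*(1-α))*(W false true)) (((1-p)*α + p*(1-α))*(1-W true false))
      + max ((p*α + (1-p)*(1-α))*(1-W false true)) (((1-p)*α + p*(1-α))*(W true false)) := by
    rw [pcYZ, Fintype.sum_bool, sup_bool (fun u => (∑ x, P1 p α x u) * W u true),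
      sup_bool (fun u => (∑ x, P1 p α x u) * W u false)]
    simp only [Fintype.sum_bool, P1, bern, hwa, hwb]
    norm_num
    ring_nf
  rw [hX, hY]
  set a := W false true
  set b := W true false
  have hxt1 : (1-p)*α*(1-b) + (1-p)*(1-α)*a ≤
      max ((1-p)*α*(1-b) + (1-p)*(1-α)*a) (p*(1-α)*(1-b) + p*α*a) := le_max_left _ _
  have hxt2 : p*(1-α)*(1-b) + p*α*a ≤
      max ((1-p)*α*(1-b) + (1-p)*(1-α)*a) (p*(1-α)*(1-b) + p*α*a) := le_max_right _ _
  have hxf1 : (1-p)*α*b + (1-p)*(1-α)*(1-a) ≤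
      max ((1-p)*α*b + (1-p)*(1-α)*(1-a)) (p*(1-α)*b + p*α*(1-a)) := le_max_left _ _
  have hxf2 : p*(1-α)*b + p*α*(1-a) ≤
      max ((1-p)*α*b + (1-p)*(1-α)*(1-a)) (p*(1-α)*b + p*α*(1-a)) := le_max_right _ _
  have hq0 : (0:ℝ) ≤ α*(1-p)+(1-α)*p := by nlinarith
  have hm1 := mul_le_mul_of_nonneg_left hxt1 hq0
  have hm2 := mul_le_mul_of_nonneg_left hxt2 hq0
  have hm3 := mul_le_mul_of_nonneg_left hxf1 hq0
  have hm4 := mul_le_mul_of_nonneg_left hxf2 hq0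
  have hr1 : (0:ℝ) ≤ α*(1-α)*(2*p-1)*a :=
    mul_nonneg (mul_nonneg (mul_nonneg ha0.le (by linarith)) (by linarith)) ha'
  have hr2 : (0:ℝ) ≤ α*(1-α)*(2*p-1)*(1-a) :=
    mul_nonneg (mul_nonneg (mul_nonneg ha0.le (by linarith)) (by linarith)) (by linarith)
  rcases max_cases ((p*α + (1-p)*(1-α))*a) (((1-p)*α + p*(1-α))*(1-b)) with ⟨e1, _⟩ | ⟨e1, _⟩ <;>
    rcases max_cases ((p*α + (1-p)*(1-α))*(1-a)) (((1-p)*α + p*(1-α))*b) with ⟨e2, _⟩ | ⟨e2, _⟩ <;>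
    rw [e1, e2] <;> nlinarith [hm1, hm2, hm3, hm4, hr1, hr2]

lemma jointIID_nonneg {n : ℕ} {p α : ℝ} (hp0 : 0 ≤ p) (hp1 : p ≤ 1) (ha0 : 0 ≤ α)
    (ha1 : α ≤ 1) : ∀ x y, 0 ≤ jointIID n p α x y := fun x y =>
  Finset.prod_nonneg fun k _ =>
    mul_nonneg (bern_nonneg hp0 hp1 _) (bern_nonneg ha0 ha1 _)

set_option maxHeartbeats 2000000 in
/-- Corollary 3, case `p > 1/2`, `α > 0`: the gap between the
optimal and the optimal memoryless filter is lower bounded by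
`((1−α) − ε)(Φ(1) − Φ(n))` for all sufficiently large `n`, where `ε_L n` is as in
Theorem 4 (i.e., the closed-form formula for `h̲_n` holds on `[ε_L n, 1−α]`). -/
theorem gap_lower_bound (p α : ℝ)
    (hp : p ∈ Set.Ioo (1 / 2 : ℝ) 1) (hα : α ∈ Set.Ioo (0 : ℝ) (1 / 2))
    (hpα : p < 1 - α) (εL : ℕ → ℝ)
    (hεL : ∀ n, 0 < n → εL n < 1 - α ∧
      ∀ ε ∈ Set.Icc (εL n) (1 - α),
        hUnderN n p α ε ^ n =
          1 - ((1 - α) ^ n - ε ^ n) / (((1 - α) * p) ^ n - (α * (1 - p)) ^ n) *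
            (α * (1 - p) + (1 - α) * p) ^ n) :
    ∃ N0 : ℕ, ∀ n ≥ N0, ∀ ε ∈ Set.Icc (εL n) (1 - α),
      ((1 - α) - ε) * (Phi p α 1 - Phi p α n) ≤
        hUnderN n p α ε - hMemless n p α ε := by
  obtain ⟨hp2, hp1⟩ := hp
  obtain ⟨hα0, hα1⟩ := hα
  have hq0 : (0:ℝ) < α*(1-p)+(1-α)*p := by nlinarith
  have hs0 : (0:ℝ) < (1-α)*p := by nlinarith
  have ht0 : (0:ℝ) < α*(1-p) := by nlinarith
  have hts : α*(1-p) < (1-α)*p := by nlinarith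
  have hrs : (α*(1-p)+(1-α)*p)*(1-α) < (1-α)*p := by
    nlinarith [mul_pos (mul_pos (show (0:ℝ)<1-α by linarith) hα0)
      (show (0:ℝ)<2*p-1 by linarith)]
  have hr0 : (0:ℝ) < (α*(1-p)+(1-α)*p)*(1-α) := by nlinarith
  have htend : Filter.Tendsto
      (fun n : ℕ => ((α*(1-p)+(1-α)*p)*(1-α)/((1-α)*p))^n + (α*(1-p)/((1-α)*p))^n)
      Filter.atTop (nhds 0) := by
    have h1 := tendsto_pow_atTop_nhds_zero_of_lt_one (le_of_lt (div_pos hr0 hs0))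
      ((div_lt_one hs0).2 hrs)
    have h2 := tendsto_pow_atTop_nhds_zero_of_lt_one (le_of_lt (div_pos ht0 hs0))
      ((div_lt_one hs0).2 hts)
    simpa using h1.add h2
  obtain ⟨N1, hN1⟩ := Filter.eventually_atTop.1
    (htend.eventually (eventually_le_nhds (by norm_num : (0:ℝ) < 1)))
  refine ⟨max N1 1, fun n hn ε hε => ?_⟩
  have hn1 : 1 ≤ n := le_trans (le_max_right N1 1) hn
  have hnne : n ≠ 0 := by omega
  have hDn : (0:ℝ) < ((1-α)*p)^n - (α*(1-p))^n :=
    sub_pos.2 (pow_lt_pow_left₀ hts ht0.le hnne)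
  have hpow : ((α*(1-p)+(1-α)*p)*(1-α))^n + (α*(1-p))^n ≤ ((1-α)*p)^n := by
    have h := hN1 n (le_trans (le_max_left _ _) hn)
    rw [div_pow, div_pow, ← add_div, div_le_one (pow_pos hs0 n)] at h
    exact h
  obtain ⟨hεLlt, hform⟩ := hεL n (by omega)
  obtain ⟨hεlo, hεhi⟩ := hε
  -- any channel has pcXZ^{1/n} ≥ p, so the formula forces p ≤ εL n
  have hzero : ∀ ε', 0 ≤ ε' → ε' < p → hUnderN n p α ε' = 0 := by
    intro ε' h0' hlt'
    have hemp : {u | ∃ F : (Fin n → Bool) → (Fin n → Bool) → ℝ, IsChannel F ∧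
        pcXZ (jointIID n p α) F ^ ((n : ℝ)⁻¹) ≤ ε' ∧
        u = pcYZ (jointIID n p α) F ^ ((n : ℝ)⁻¹)} = ∅ := by
      rw [Set.eq_empty_iff_forall_notMem]
      rintro u ⟨F, hF, hcon2, rfl⟩
      have h6 : p^n ≤ pcXZ (jointIID n p α) F := pcXZ_ge_pow F hF
      have hpc0 : (0:ℝ) ≤ pcXZ (jointIID n p α) F :=
        le_trans (pow_nonneg (by linarith) n) h6
      have h7 : pcXZ (jointIID n p α) F ≤ ε'^n := by
        calc pcXZ (jointIID n p α) F
            = (pcXZ (jointIID n p α) F ^ ((n:ℝ)⁻¹))^n :=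
              (Real.rpow_inv_natCast_pow hpc0 hnne).symm
          _ ≤ ε'^n := pow_le_pow_left₀ (Real.rpow_nonneg hpc0 _) hcon2 n
      have h8 : ε'^n < p^n := pow_lt_pow_left₀ hlt' h0' hnne
      linarith
    rw [hUnderN, hemp, Real.sSup_empty]
  have hple : p ≤ εL n := by
    by_contra hcon
    push_neg at hcon
    have hε1lt : max (εL n) (p/2) < p := max_lt hcon (by linarith)
    have hε10 : (0:ℝ) ≤ max (εL n) (p/2) := le_trans (by linarith) (le_max_right _ _)
    have h12 : max (εL n) (p/2) < (max (εL n) (p/2) + p)/2 := by linarith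
    have hε2lt : (max (εL n) (p/2) + p)/2 < p := by linarith
    have h1 := hform (max (εL n) (p/2)) ⟨le_max_left _ _, by linarith⟩
    have h2 := hform ((max (εL n) (p/2) + p)/2)
      ⟨le_trans (le_max_left _ _) h12.le, by linarith⟩
    rw [hzero _ hε10 hε1lt, zero_pow hnne] at h1
    rw [hzero _ (by linarith) hε2lt, zero_pow hnne] at h2
    have hq_ne : ((α*(1-p)+(1-α)*p):ℝ)^n ≠ 0 := (pow_pos hq0 n).ne'
    have hD_ne : (((1-α)*p)^n - (α*(1-p))^n : ℝ) ≠ 0 := hDn.ne'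
    have e1 : ((1-α)^n - (max (εL n) (p/2))^n)/(((1-α)*p)^n - (α*(1-p))^n)
        * (α*(1-p)+(1-α)*p)^n = 1 := by linarith
    have e2 : ((1-α)^n - (((max (εL n) (p/2)) + p)/2)^n)/(((1-α)*p)^n - (α*(1-p))^n)
        * (α*(1-p)+(1-α)*p)^n = 1 := by linarith
    have e3 := mul_right_cancel₀ hq_ne (e1.trans e2.symm)
    rw [div_eq_div_iff hD_ne hD_ne] at e3
    have e4 := mul_right_cancel₀ hD_ne e3
    have e5 := pow_lt_pow_left₀ h12 hε10 hnne
    linarith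
  have hpε : p ≤ ε := le_trans hple hεlo
  have hε0 : (0:ℝ) < ε := lt_of_lt_of_le (by linarith) hpε
  have hA0 : 0 ≤ hUnderN n p α ε := by
    rw [hUnderN]
    refine Real.sSup_nonneg fun u hu => ?_
    obtain ⟨F, hF, _, rfl⟩ := hu
    exact Real.rpow_nonneg (pcYZ_nonneg _ _
      (jointIID_nonneg (by linarith) (by linarith) (by linarith) (by linarith)) hF.1) _
  have hPhin0 : 0 ≤ Phi p α n :=
    div_nonneg (mul_nonneg (pow_nonneg hq0.le n) (pow_nonneg (by linarith) _)) hDn.le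
  have hPhin1 : Phi p α n * (1-α) ≤ 1 := by
    rw [Phi, div_mul_eq_mul_div, div_le_one hDn]
    have he : (α*(1-p)+(1-α)*p)^n * (1-α)^(n-1) * (1-α)
        = ((α*(1-p)+(1-α)*p)*(1-α))^n := by
      rw [mul_assoc, ← pow_succ, Nat.sub_add_cancel hn1, mul_pow]
    rw [he]
    linarith [pow_pos ht0 n]
  have hδ0 : 0 ≤ ((1-α) - ε) * Phi p α n := mul_nonneg (by linarith) hPhin0
  have hkey : ε ≤ (1-α) * (1 - ((1-α)-ε) * Phi p α n) := by
    nlinarith [mul_nonneg (show (0:ℝ) ≤ (1-α)-ε by linarith)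
      (sub_nonneg.2 hPhin1)]
  have h1mδ : 0 ≤ 1 - ((1-α)-ε)*Phi p α n := by nlinarith [hkey, hε0]
  have hgeom1 : (1:ℝ) - (1 - ((1-α)-ε)*Phi p α n)^n
      = (((1-α)-ε)*Phi p α n) * ∑ i ∈ Finset.range n, (1 - ((1-α)-ε)*Phi p α n)^i := by
    have h := geom_sum_mul (1 - ((1-α)-ε)*Phi p α n) n
    linear_combination h
  have hgeom2 : (1-α)^n - ε^n
      = ((1-α) - ε) * ∑ i ∈ Finset.range n, (1-α)^i * ε^(n-1-i) := by
    have h := geom_sum₂_mul (1-α) ε n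
    linear_combination -h
  have hsum : (∑ i ∈ Finset.range n, (1-α)^i * ε^(n-1-i))
      ≤ (1-α)^(n-1) * ∑ i ∈ Finset.range n, (1 - ((1-α)-ε)*Phi p α n)^i := by
    calc (∑ i ∈ Finset.range n, (1-α)^i * ε^(n-1-i))
        ≤ ∑ i ∈ Finset.range n, (1-α)^(n-1) * (1 - ((1-α)-ε)*Phi p α n)^(n-1-i) := by
          refine Finset.sum_le_sum fun i hi => ?_
          have hin : i ≤ n-1 := by
            have := Finset.mem_range.1 hi; omega
          have hεb : ε^(n-1-i) ≤ ((1-α) * (1 - ((1-α)-ε)*Phi p α n))^(n-1-i) :=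
            pow_le_pow_left₀ hε0.le hkey _
          calc (1-α)^i * ε^(n-1-i)
              ≤ (1-α)^i * ((1-α) * (1 - ((1-α)-ε)*Phi p α n))^(n-1-i) :=
                mul_le_mul_of_nonneg_left hεb (pow_nonneg (by linarith) i)
            _ = (1-α)^(n-1) * (1 - ((1-α)-ε)*Phi p α n)^(n-1-i) := by
                rw [mul_pow, ← mul_assoc, ← pow_add, Nat.add_sub_cancel' hin]
      _ = (1-α)^(n-1) * ∑ i ∈ Finset.range n, (1 - ((1-α)-ε)*Phi p α n)^(n-1-i) := by
          rw [Finset.mul_sum]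
      _ = (1-α)^(n-1) * ∑ i ∈ Finset.range n, (1 - ((1-α)-ε)*Phi p α n)^i := by
          rw [Finset.sum_range_reflect (fun i => (1 - ((1-α)-ε)*Phi p α n)^i) n]
  have hfrac : ((1-α)^n - ε^n)/(((1-α)*p)^n - (α*(1-p))^n) * (α*(1-p)+(1-α)*p)^n
      ≤ (((1-α)-ε)*Phi p α n) * ∑ i ∈ Finset.range n, (1 - ((1-α)-ε)*Phi p α n)^i := by
    rw [hgeom2]
    have hL : ((1-α) - ε) * (∑ i ∈ Finset.range n, (1-α)^i * ε^(n-1-i))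
          / (((1-α)*p)^n - (α*(1-p))^n) * (α*(1-p)+(1-α)*p)^n
        = (((1-α)-ε) * ((∑ i ∈ Finset.range n, (1-α)^i * ε^(n-1-i))
            * (α*(1-p)+(1-α)*p)^n)) / (((1-α)*p)^n - (α*(1-p))^n) := by
      ring
    have hR : (((1-α)-ε)*Phi p α n) * (∑ i ∈ Finset.range n, (1 - ((1-α)-ε)*Phi p α n)^i)
        = (((1-α)-ε) * (((1-α)^(n-1) * ∑ i ∈ Finset.range n, (1 - ((1-α)-ε)*Phi p α n)^i)
            * (α*(1-p)+(1-α)*p)^n)) / (((1-α)*p)^n - (α*(1-p))^n) := by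
      rw [Phi]; ring
    rw [hL, hR, div_le_div_iff_of_pos_right hDn]
    exact mul_le_mul_of_nonneg_left
      (mul_le_mul_of_nonneg_right hsum (pow_nonneg hq0.le n))
      (by linarith : (0:ℝ) ≤ (1-α)-ε)
  have hAn := hform ε ⟨hεlo, hεhi⟩
  have hstep : (1 - ((1-α)-ε)*Phi p α n)^n ≤ hUnderN n p α ε ^ n := by
    rw [hAn]; linarith [hgeom1, hfrac]
  have hAlow : 1 - ((1-α)-ε)*Phi p α n ≤ hUnderN n p α ε :=
    le_of_pow_le_pow_left₀ hnne hA0 hstep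
  -- upper bound on hMemless
  have hpa : (0:ℝ) < p - α := by linarith
  have hPhi1 : Phi p α 1 = (α*(1-p)+(1-α)*p)/(p-α) := by
    rw [Phi]
    norm_num
    rw [show ((1:ℝ)-α)*p - α*(1-p) = p - α by ring]
  have hnum : ((1-α)-ε)*(α*(1-p)+(1-α)*p) ≤ p - α := by
    have hmono : ((1-α)-ε)*(α*(1-p)+(1-α)*p) ≤ ((1-α)-p)*(α*(1-p)+(1-α)*p) :=
      mul_le_mul_of_nonneg_right (by linarith) hq0.le
    nlinarith [hmono]
  have hc0 : 0 ≤ 1 - ((1-α)-ε)*Phi p α 1 := by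
    rw [hPhi1]
    have : ((1-α)-ε)*((α*(1-p)+(1-α)*p)/(p-α))
        = (((1-α)-ε)*(α*(1-p)+(1-α)*p))/(p-α) := by ring
    rw [this]
    have := (div_le_one hpa).2 hnum
    linarith
  have hB : hMemless n p α ε ≤ 1 - ((1-α)-ε)*Phi p α 1 := by
    rw [hMemless]
    refine Real.sSup_le ?_ hc0
    rintro u ⟨W, hW0, hW1, hcon2, rfl⟩
    have hjnn := jointIID_nonneg (n := n) (p := p) (α := α)
      (by linarith) (by linarith) (by linarith) (by linarith)
    have hmnn : ∀ y z, 0 ≤ memless n W y z := fun y z =>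
      Finset.prod_nonneg fun k _ => hW0 _ _
    have hpcn0 : 0 ≤ pcXZ (jointIID n p α) (memless n W) :=
      pcXZ_nonneg _ _ hjnn hmnn
    have hXn : pcXZ (jointIID n p α) (memless n W) ≤ ε^n := by
      calc pcXZ (jointIID n p α) (memless n W)
          = (pcXZ (jointIID n p α) (memless n W) ^ ((n:ℝ)⁻¹))^n :=
            (Real.rpow_inv_natCast_pow hpcn0 hnne).symm
        _ ≤ ε^n := pow_le_pow_left₀ (Real.rpow_nonneg hpcn0 _) hcon2 n
    have hXF := pcXZ_factor_ge (n := n) (by linarith : (0:ℝ) ≤ p) (by linarith)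
      (by linarith : (0:ℝ) ≤ α) (by linarith) W hW0
    have he1 : pcXZ (P1 p α) W ≤ ε :=
      le_of_pow_le_pow_left₀ hnne hε0.le (le_trans hXF hXn)
    have hky := key_single hp2 hp1 hα0 hα1 W hW0 hW1
    have hv0 : 0 ≤ pcYZ (P1 p α) W := pcYZ_nonneg _ _
      (P1_nonneg (by linarith) (by linarith) (by linarith) (by linarith)) hW0
    have hvc : pcYZ (P1 p α) W ≤ 1 - ((1-α)-ε)*Phi p α 1 := by
      rw [hPhi1]
      have hprod : (α*(1-p)+(1-α)*p) * pcXZ (P1 p α) W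
          ≤ (α*(1-p)+(1-α)*p) * ε := mul_le_mul_of_nonneg_left he1 hq0.le
      have h1 : (p-α) * pcYZ (P1 p α) W
          ≤ (p-α) - ((1-α)-ε)*(α*(1-p)+(1-α)*p) := by nlinarith [hky, hprod]
      have h2 : pcYZ (P1 p α) W
          ≤ ((p-α) - ((1-α)-ε)*(α*(1-p)+(1-α)*p))/(p-α) := by
        rw [le_div_iff₀ hpa]; linarith
      calc pcYZ (P1 p α) W ≤ _ := h2
        _ = 1 - ((1-α)-ε)*((α*(1-p)+(1-α)*p)/(p-α)) := by field_simp
    have hYF := pcYZ_factor_le (n := n) (by linarith : (0:ℝ) ≤ p) (by linarith)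
      (by linarith : (0:ℝ) ≤ α) (by linarith) W hW0
    have hYn0 : 0 ≤ pcYZ (jointIID n p α) (memless n W) :=
      pcYZ_nonneg _ _ hjnn hmnn
    calc pcYZ (jointIID n p α) (memless n W) ^ ((n:ℝ)⁻¹)
        ≤ (pcYZ (P1 p α) W ^ n) ^ ((n:ℝ)⁻¹) :=
          Real.rpow_le_rpow hYn0 hYF (by positivity)
      _ = pcYZ (P1 p α) W := Real.pow_rpow_inv_natCast hv0 hnne
      _ ≤ _ := hvc
  have hfin : ((1-α)-ε)*(Phi p α 1 - Phi p α n)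
      = (1 - ((1-α)-ε)*Phi p α n) - (1 - ((1-α)-ε)*Phi p α 1) := by ring
  rw [hfin]
  linarith [hAlow, hB]
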